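/- arXiv:0911.2757 — 6 statements merged into one kernel-verified Lean document; each statement's English description precedes it below -/
import Mathlib

section
/- Let D, θ be real constants and C = 0. Then the real vector space Sol(0,D,θ) of triples (T, l, σ) of smooth functions ℝ → ℝ satisfying, for all t ∈ ℝ, l″(t) = 2D·l(t), σ′(t) = (θ²/4)·T″(t), and T‴(t) = 8D·T′(t), has dimension 6. -/
open Real

private lemma one_le_inf' : (1 : WithTop ℕ∞) ≤ ((⊤ : ℕ∞) : WithTop ℕ∞) := by
  exact_mod_cast le_top

private lemma ne_zero_inf' : ((⊤ : ℕ∞) : WithTop ℕ∞) ≠ 0 :=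
  (lt_of_lt_of_le zero_lt_one one_le_inf').ne'

private lemma deriv_fun_add' {f g : ℝ → ℝ} (hf : Differentiable ℝ f)
    (hg : Differentiable ℝ g) : deriv (f + g) = deriv f + deriv g :=
  funext fun t => deriv_add (hf t) (hg t)

private lemma deriv_fun_smul' (c : ℝ) {f : ℝ → ℝ} (hf : Differentiable ℝ f) :
    deriv (c • f) = c • deriv f :=
  funext fun t => deriv_const_smul c (hf t)

private lemma smooth_deriv' {f : ℝ → ℝ} (hf : ContDiff ℝ (⊤ : ℕ∞) f) :
    ContDiff ℝ (⊤ : ℕ∞) (deriv f) :=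
  (contDiff_infty_iff_deriv.mp hf).2

/-- The space of triples `(T, l, σ)` of smooth functions satisfying the isovector
system `C·l = 0`, `l″ = 2D·l`, `σ′ = (θ²/4)·T″`, `T‴ = 8D·T′`. -/
def Sol (C D θ : ℝ) : Submodule ℝ ((ℝ → ℝ) × (ℝ → ℝ) × (ℝ → ℝ)) where
  carrier := {p | ContDiff ℝ (⊤ : ℕ∞) p.1 ∧ ContDiff ℝ (⊤ : ℕ∞) p.2.1 ∧
    ContDiff ℝ (⊤ : ℕ∞) p.2.2 ∧
    (∀ t, C * p.2.1 t = 0) ∧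
    (∀ t, deriv (deriv p.2.1) t = 2 * D * p.2.1 t) ∧
    (∀ t, deriv p.2.2 t = θ ^ 2 / 4 * deriv (deriv p.1) t) ∧
    (∀ t, deriv (deriv (deriv p.1)) t = 8 * D * deriv p.1 t)}
  zero_mem' := by
    have h0 : deriv (0 : ℝ → ℝ) = 0 := funext fun x => deriv_const x 0
    refine ⟨contDiff_const, contDiff_const, contDiff_const, ?_, ?_, ?_, ?_⟩ <;>
      intro t <;> simp [h0]
  add_mem' := by
    rintro ⟨T₁, l₁, σ₁⟩ ⟨T₂, l₂, σ₂⟩ ⟨hT₁, hl₁, hσ₁, e₁, e₂, e₃, e₄⟩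
      ⟨hT₂, hl₂, hσ₂, f₁, f₂, f₃, f₄⟩
    have dT₁ : Differentiable ℝ T₁ := hT₁.differentiable ne_zero_inf'
    have dT₂ : Differentiable ℝ T₂ := hT₂.differentiable ne_zero_inf'
    have dl₁ : Differentiable ℝ l₁ := hl₁.differentiable ne_zero_inf'
    have dl₂ : Differentiable ℝ l₂ := hl₂.differentiable ne_zero_inf'
    have dσ₁ : Differentiable ℝ σ₁ := hσ₁.differentiable ne_zero_inf'
    have dσ₂ : Differentiable ℝ σ₂ := hσ₂.differentiable ne_zero_inf'
    have ddl₁ : Differentiable ℝ (deriv l₁) := (smooth_deriv' hl₁).differentiable ne_zero_inf'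
    have ddl₂ : Differentiable ℝ (deriv l₂) := (smooth_deriv' hl₂).differentiable ne_zero_inf'
    have ddT₁ : Differentiable ℝ (deriv T₁) := (smooth_deriv' hT₁).differentiable ne_zero_inf'
    have ddT₂ : Differentiable ℝ (deriv T₂) := (smooth_deriv' hT₂).differentiable ne_zero_inf'
    have dddT₁ : Differentiable ℝ (deriv (deriv T₁)) :=
      (smooth_deriv' (smooth_deriv' hT₁)).differentiable ne_zero_inf'
    have dddT₂ : Differentiable ℝ (deriv (deriv T₂)) :=
      (smooth_deriv' (smooth_deriv' hT₂)).differentiable ne_zero_inf'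
    have hl : deriv (deriv (l₁ + l₂)) = deriv (deriv l₁) + deriv (deriv l₂) := by
      rw [deriv_fun_add' dl₁ dl₂, deriv_fun_add' ddl₁ ddl₂]
    have hT2 : deriv (deriv (T₁ + T₂)) = deriv (deriv T₁) + deriv (deriv T₂) := by
      rw [deriv_fun_add' dT₁ dT₂, deriv_fun_add' ddT₁ ddT₂]
    have hT3 : deriv (deriv (deriv (T₁ + T₂)))
        = deriv (deriv (deriv T₁)) + deriv (deriv (deriv T₂)) := by
      rw [hT2, deriv_fun_add' dddT₁ dddT₂]
    refine ⟨hT₁.add hT₂, hl₁.add hl₂, hσ₁.add hσ₂, ?_, ?_, ?_, ?_⟩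
    · intro t
      simp only [Prod.mk_add_mk, Pi.add_apply, mul_add, e₁ t, f₁ t, add_zero]
    · intro t
      simp only [Prod.mk_add_mk]
      rw [hl]
      simp only [Pi.add_apply, e₂ t, f₂ t]; ring
    · intro t
      simp only [Prod.mk_add_mk]
      rw [hT2, deriv_fun_add' dσ₁ dσ₂]
      simp only [Pi.add_apply, e₃ t, f₃ t]; ring
    · intro t
      simp only [Prod.mk_add_mk]
      rw [hT3, deriv_fun_add' dT₁ dT₂]
      simp only [Pi.add_apply, e₄ t, f₄ t]; ring
  smul_mem' := by
    rintro c ⟨T, l, σ⟩ ⟨hT, hl, hσ, e₁, e₂, e₃, e₄⟩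
    have dT : Differentiable ℝ T := hT.differentiable ne_zero_inf'
    have dl : Differentiable ℝ l := hl.differentiable ne_zero_inf'
    have dσ : Differentiable ℝ σ := hσ.differentiable ne_zero_inf'
    have ddl : Differentiable ℝ (deriv l) := (smooth_deriv' hl).differentiable ne_zero_inf'
    have ddT : Differentiable ℝ (deriv T) := (smooth_deriv' hT).differentiable ne_zero_inf'
    have dddT : Differentiable ℝ (deriv (deriv T)) :=
      (smooth_deriv' (smooth_deriv' hT)).differentiable ne_zero_inf'
    have hl2 : deriv (deriv (c • l)) = c • deriv (deriv l) := by
      rw [deriv_fun_smul' c dl, deriv_fun_smul' c ddl]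
    have hT2 : deriv (deriv (c • T)) = c • deriv (deriv T) := by
      rw [deriv_fun_smul' c dT, deriv_fun_smul' c ddT]
    have hT3 : deriv (deriv (deriv (c • T))) = c • deriv (deriv (deriv T)) := by
      rw [hT2, deriv_fun_smul' c dddT]
    refine ⟨hT.const_smul c, hl.const_smul c, hσ.const_smul c, ?_, ?_, ?_, ?_⟩
    · intro t
      simp only [Prod.smul_mk, Pi.smul_apply, smul_eq_mul]
      rw [mul_comm c (l t), ← mul_assoc, e₁ t, zero_mul]
    · intro t
      simp only [Prod.smul_mk]
      rw [hl2]
      simp only [Pi.smul_apply, smul_eq_mul, e₂ t]; ring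
    · intro t
      simp only [Prod.smul_mk]
      rw [hT2, deriv_fun_smul' c dσ]
      simp only [Pi.smul_apply, smul_eq_mul, e₃ t]; ring
    · intro t
      simp only [Prod.smul_mk]
      rw [hT3, deriv_fun_smul' c dT]
      simp only [Pi.smul_apply, smul_eq_mul, e₄ t]; ring



noncomputable section
namespace SolAux

abbrev E6 := Fin 6 → ℝ

def Alin (D θ : ℝ) : E6 →ₗ[ℝ] E6 :=
  LinearMap.pi ![LinearMap.proj 1, LinearMap.proj 2, (8*D) • LinearMap.proj 1,
    LinearMap.proj 4, (2*D) • LinearMap.proj 3, (θ^2/4) • LinearMap.proj 2]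

def A (D θ : ℝ) : E6 →L[ℝ] E6 := LinearMap.toContinuousLinearMap (Alin D θ)

def sol (D θ : ℝ) (v : E6) : ℝ → E6 := fun t => NormedSpace.exp (t • A D θ) v

lemma sol_hasDerivAt (D θ : ℝ) (v : E6) (t : ℝ) :
    HasDerivAt (sol D θ v) (A D θ (sol D θ v t)) t := by
  have h := hasDerivAt_exp_smul_const' (𝕂 := ℝ) (A D θ) t
  have h2 := ((ContinuousLinearMap.apply ℝ E6 v).hasFDerivAt.comp_hasDerivAt t h)
  exact h2

lemma sol_zero (D θ : ℝ) (v : E6) : sol D θ v 0 = v := by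
  simp [sol, NormedSpace.exp_zero]

lemma sol_add (D θ : ℝ) (v w : E6) : sol D θ (v + w) = sol D θ v + sol D θ w := by
  funext t; simp [sol]

lemma sol_smul (D θ : ℝ) (c : ℝ) (v : E6) : sol D θ (c • v) = c • sol D θ v := by
  funext t; simp [sol]

lemma sol_contDiff (D θ : ℝ) (v : E6) : ContDiff ℝ (⊤ : ℕ∞) (sol D θ v) := by
  have hd : Differentiable ℝ (sol D θ v) := fun t => (sol_hasDerivAt D θ v t).differentiableAt
  have hderiv : deriv (sol D θ v) = fun t => A D θ (sol D θ v t) :=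
    funext fun t => (sol_hasDerivAt D θ v t).deriv
  have key : ∀ n : ℕ, ContDiff ℝ n (sol D θ v) := by
    intro n
    induction n with
    | zero => exact contDiff_zero.2 hd.continuous
    | succ n ih =>
      rw [show ((n+1 : ℕ) : WithTop ℕ∞) = (n : WithTop ℕ∞) + 1 by norm_cast,
        contDiff_succ_iff_deriv]
      refine ⟨hd, by simp, ?_⟩
      rw [hderiv]
      exact (A D θ).contDiff.comp ih
  exact contDiff_infty.2 key

lemma ode_unique {B : E6 →L[ℝ] E6} {f g : ℝ → E6}
    (hf : ∀ t, HasDerivAt f (B (f t)) t) (hg : ∀ t, HasDerivAt g (B (g t)) t)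
    (h0 : f 0 = g 0) : f = g := by
  funext t
  have ht : t ∈ Set.Ioo (-(|t|+1)) (|t|+1) := by
    constructor
    · nlinarith [abs_nonneg t, neg_abs_le t]
    · nlinarith [le_abs_self t]
  have h0' : (0:ℝ) ∈ Set.Ioo (-(|t|+1)) (|t|+1) := by
    constructor <;> nlinarith [abs_nonneg t]
  exact ODE_solution_unique_of_mem_Ioo (v := fun _ y => B y) (s := fun _ => Set.univ)
    (K := ‖B‖₊) (fun _ _ => B.lipschitz.lipschitzOnWith) h0'
    (fun s _ => ⟨hf s, trivial⟩) (fun s _ => ⟨hg s, trivial⟩) h0 ht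

lemma hasDerivAt_pi6 {f : ℝ → E6} {f' : E6} {t : ℝ}
    (h : ∀ i, HasDerivAt (fun s => f s i) (f' i) t) : HasDerivAt f f' t := by
  exact hasDerivAt_pi.2 h

lemma sol_comp_hasDerivAt (D θ : ℝ) (v : E6) (i : Fin 6) (t : ℝ) :
    HasDerivAt (fun s => sol D θ v s i) (A D θ (sol D θ v t) i) t :=
  (ContinuousLinearMap.proj (R := ℝ) (φ := fun _ : Fin 6 => ℝ) i).hasFDerivAt.comp_hasDerivAt t
    (sol_hasDerivAt D θ v t)

lemma sol_comp_contDiff (D θ : ℝ) (v : E6) (i : Fin 6) :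
    ContDiff ℝ (⊤ : ℕ∞) (fun s => sol D θ v s i) :=
  (ContinuousLinearMap.proj (R := ℝ) (φ := fun _ : Fin 6 => ℝ) i).contDiff.comp
    (sol_contDiff D θ v)

lemma deriv_zero_fun : deriv (0 : ℝ → ℝ) = 0 := funext fun x => deriv_const x 0

variable (D θ : ℝ)

lemma d0 (v : E6) : deriv (fun t => sol D θ v t 0) = fun t => sol D θ v t 1 :=
  funext fun t => (sol_comp_hasDerivAt D θ v 0 t).deriv

lemma d1 (v : E6) : deriv (fun t => sol D θ v t 1) = fun t => sol D θ v t 2 :=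
  funext fun t => (sol_comp_hasDerivAt D θ v 1 t).deriv

lemma d2 (v : E6) : deriv (fun t => sol D θ v t 2) = fun t => 8*D * sol D θ v t 1 :=
  funext fun t => (sol_comp_hasDerivAt D θ v 2 t).deriv

lemma d3 (v : E6) : deriv (fun t => sol D θ v t 3) = fun t => sol D θ v t 4 :=
  funext fun t => (sol_comp_hasDerivAt D θ v 3 t).deriv

lemma d4 (v : E6) : deriv (fun t => sol D θ v t 4) = fun t => 2*D * sol D θ v t 3 :=
  funext fun t => (sol_comp_hasDerivAt D θ v 4 t).deriv

lemma d5 (v : E6) : deriv (fun t => sol D θ v t 5) = fun t => θ^2/4 * sol D θ v t 2 :=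
  funext fun t => (sol_comp_hasDerivAt D θ v 5 t).deriv

lemma mem_sol (v : E6) :
    ((fun t => sol D θ v t 0, fun t => sol D θ v t 3, fun t => sol D θ v t 5) :
      (ℝ → ℝ) × (ℝ → ℝ) × (ℝ → ℝ)) ∈ Sol 0 D θ := by
  refine ⟨sol_comp_contDiff D θ v 0, sol_comp_contDiff D θ v 3, sol_comp_contDiff D θ v 5,
    fun t => by simp, ?_, ?_, ?_⟩
  · intro t
    show deriv (deriv fun t => sol D θ v t 3) t = _
    rw [d3, d4]
  · intro t
    show deriv (fun t => sol D θ v t 5) t = θ^2/4 * deriv (deriv fun t => sol D θ v t 0) t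
    rw [d5, d0, d1]
  · intro t
    show deriv (deriv (deriv fun t => sol D θ v t 0)) t
      = 8*D * deriv (fun t => sol D θ v t 0) t
    rw [d0, d1, d2]

def Ψ : E6 →ₗ[ℝ] Sol 0 D θ where
  toFun v := ⟨(fun t => sol D θ v t 0, fun t => sol D θ v t 3, fun t => sol D θ v t 5),
    mem_sol D θ v⟩
  map_add' v w := by
    apply Subtype.ext
    refine Prod.ext ?_ (Prod.ext ?_ ?_) <;> funext t <;>
      simp [sol_add D θ v w, Prod.fst_add, Prod.snd_add]
  map_smul' c v := by
    apply Subtype.ext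
    refine Prod.ext ?_ (Prod.ext ?_ ?_) <;> funext t <;>
      simp [sol_smul D θ c v]

lemma Ψ_injective : Function.Injective (Ψ D θ) := by
  rw [injective_iff_map_eq_zero]
  intro v h
  have hval := congrArg Subtype.val h
  have hT : (fun t => sol D θ v t 0) = (0 : ℝ → ℝ) := congrArg Prod.fst hval
  have hl : (fun t => sol D θ v t 3) = (0 : ℝ → ℝ) := congrArg (fun p => p.2.1) hval
  have hσ : (fun t => sol D θ v t 5) = (0 : ℝ → ℝ) := congrArg (fun p => p.2.2) hval
  have h1 : (fun t => sol D θ v t 1) = (0 : ℝ → ℝ) := by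
    rw [← d0, hT, deriv_zero_fun]
  have h2 : (fun t => sol D θ v t 2) = (0 : ℝ → ℝ) := by
    rw [← d1, h1, deriv_zero_fun]
  have h4 : (fun t => sol D θ v t 4) = (0 : ℝ → ℝ) := by
    rw [← d3, hl, deriv_zero_fun]
  have hv : v = sol D θ v 0 := (sol_zero D θ v).symm
  rw [hv]
  funext i
  fin_cases i
  · exact congrFun hT 0
  · exact congrFun h1 0
  · exact congrFun h2 0
  · exact congrFun hl 0
  · exact congrFun h4 0
  · exact congrFun hσ 0

lemma Ψ_surjective : Function.Surjective (Ψ D θ) := by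
  rintro ⟨⟨T, l, σ⟩, hT, hl, hσ, e₁, e₂, e₃, e₄⟩
  have dT : Differentiable ℝ T := hT.differentiable ne_zero_inf'
  have dl : Differentiable ℝ l := hl.differentiable ne_zero_inf'
  have dσ : Differentiable ℝ σ := hσ.differentiable ne_zero_inf'
  have ddl : Differentiable ℝ (deriv l) := (smooth_deriv' hl).differentiable ne_zero_inf'
  have ddT : Differentiable ℝ (deriv T) := (smooth_deriv' hT).differentiable ne_zero_inf'
  have dddT : Differentiable ℝ (deriv (deriv T)) :=
    (smooth_deriv' (smooth_deriv' hT)).differentiable ne_zero_inf'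
  set v : E6 := ![T 0, deriv T 0, deriv (deriv T) 0, l 0, deriv l 0, σ 0] with hv
  set y : ℝ → E6 :=
    fun t => ![T t, deriv T t, deriv (deriv T) t, l t, deriv l t, σ t] with hy
  have hyd : ∀ t, HasDerivAt y (A D θ (y t)) t := by
    intro t
    apply hasDerivAt_pi6
    intro i
    fin_cases i
    · exact (dT t).hasDerivAt
    · exact (ddT t).hasDerivAt
    · have := (dddT t).hasDerivAt
      exact this.congr_deriv (e₄ t)
    · exact (dl t).hasDerivAt
    · have := (ddl t).hasDerivAt
      exact this.congr_deriv (e₂ t)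
    · have := (dσ t).hasDerivAt
      exact this.congr_deriv (e₃ t)
  have hys : y = sol D θ v :=
    ode_unique hyd (fun t => sol_hasDerivAt D θ v t) (by rw [sol_zero])
  refine ⟨v, Subtype.ext ?_⟩
  refine Prod.ext ?_ (Prod.ext ?_ ?_) <;> funext t
  · exact (congrFun (congrFun hys t) 0).symm
  · exact (congrFun (congrFun hys t) 3).symm
  · exact (congrFun (congrFun hys t) 5).symm

end SolAux
end

/-- If `C = 0`, the space of solutions of the isovector system has dimension `6`. -/
theorem finrank_Sol_eq_six (D θ : ℝ) :
    Module.finrank ℝ (Sol 0 D θ) = 6 := by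
  have e : SolAux.E6 ≃ₗ[ℝ] Sol 0 D θ :=
    LinearEquiv.ofBijective (SolAux.Ψ D θ) ⟨SolAux.Ψ_injective D θ, SolAux.Ψ_surjective D θ⟩
  rw [← e.finrank_eq]
  simp [SolAux.E6]
end

section
/- Let θ ≠ 0 be a real constant and let V, η : ℝ × ℝ → ℝ be such that η(t,q) > 0 for all (t,q), for every fixed q the function t ↦ η(t,q) is differentiable, for every fixed t the function q ↦ η(t,q) is twice differentiable, and for all (t,q): θ²·∂η/∂t(t,q) = −(θ⁴/2)·∂²η/∂q²(t,q) + V(t,q)·η(t,q). Then the function S(t,q) := −θ²·ln(η(t,q)) satisfies, at every point (t,q): ∂S/∂t(t,q) + (θ²/2)·∂²S/∂q²(t,q) − (1/2)·(∂S/∂q(t,q))² + V(t,q) = 0. -/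
open Real

lemma deriv_const_mul_log (c : ℝ) (f : ℝ → ℝ) (hf : Differentiable ℝ f)
    (hpos : ∀ x, 0 < f x) :
    deriv (fun x => c * Real.log (f x)) = fun x => c * (deriv f x / f x) := by
  funext x
  exact (((hf x).hasDerivAt.log (hpos x).ne').const_mul c).deriv

/-- If `η > 0` solves the backward equation
`θ²·∂η/∂t = −(θ⁴/2)·∂²η/∂q² + V·η`, then `S = −θ²·ln η` solves the
Hamilton–Jacobi–Bellman equation
`∂S/∂t + (θ²/2)·∂²S/∂q² − (1/2)·(∂S/∂q)² + V = 0`. -/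
theorem hjb_of_backward (θ : ℝ) (hθ : θ ≠ 0) (V η : ℝ → ℝ → ℝ)
    (hpos : ∀ t q, 0 < η t q)
    (hdt : ∀ q, Differentiable ℝ fun t => η t q)
    (hdq : ∀ t, Differentiable ℝ fun q => η t q)
    (hdq2 : ∀ t, Differentiable ℝ (deriv fun q => η t q))
    (heq : ∀ t q, θ ^ 2 * deriv (fun s => η s q) t
      = -(θ ^ 4 / 2) * deriv (deriv fun p => η t p) q + V t q * η t q)
    (S : ℝ → ℝ → ℝ) (hS : ∀ t q, S t q = -θ ^ 2 * Real.log (η t q)) :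
    ∀ t q, deriv (fun s => S s q) t + θ ^ 2 / 2 * deriv (deriv fun p => S t p) q
      - 1 / 2 * (deriv (fun p => S t p) q) ^ 2 + V t q = 0 := by
  intro t q
  have hSt : (fun s => S s q) = fun s => -θ ^ 2 * Real.log (η s q) :=
    funext fun s => hS s q
  have hSq : (fun p => S t p) = fun p => -θ ^ 2 * Real.log (η t p) :=
    funext fun p => hS t p
  have h1 : deriv (fun s => S s q) t
      = -θ ^ 2 * (deriv (fun s => η s q) t / η t q) := by
    rw [hSt, deriv_const_mul_log (-θ ^ 2) _ (hdt q) (fun x => hpos x q)]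
  have h2 : deriv (fun p => S t p) q
      = -θ ^ 2 * (deriv (fun p => η t p) q / η t q) := by
    rw [hSq, deriv_const_mul_log (-θ ^ 2) _ (hdq t) (fun x => hpos t x)]
  have h3 : deriv (deriv fun p => S t p) q
      = -θ ^ 2 * ((deriv (deriv fun p => η t p) q * η t q
          - deriv (fun p => η t p) q * deriv (fun p => η t p) q) / (η t q) ^ 2) := by
    have : (deriv fun p => S t p)
        = fun p => -θ ^ 2 * (deriv (fun p => η t p) p / η t p) := by
      rw [hSq]; exact deriv_const_mul_log (-θ ^ 2) _ (hdq t) (fun x => hpos t x)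
    rw [this]
    exact ((((hdq2 t) q).hasDerivAt.div ((hdq t) q).hasDerivAt
      (hpos t q).ne').const_mul (-θ ^ 2)).deriv
  rw [h1, h2, h3]
  have he := (hpos t q).ne'
  have hb := heq t q
  field_simp at hb ⊢
  linear_combination (-η t q) * hb
end

section
/- Let α > 0, λ ∈ ℝ, δ ∈ ℝ, and set θ = α/2, C = (α⁴/128)·(δ−1)·(δ−3), D = λ²/8. Define η(t,q) = exp(λδt/4 − λq²/α²)·q^{(δ−1)/2} for t ∈ ℝ and q > 0. Then for all t ∈ ℝ and all q > 0: θ²·∂η/∂t(t,q) = −(θ⁴/2)·∂²η/∂q²(t,q) + (C/q² + D·q²)·η(t,q). -/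
open Real

/-- The function `η(t,q) = exp(λδt/4 − λq²/α²)·q^{(δ−1)/2}` solves the backward
equation `θ²·∂η/∂t = −(θ⁴/2)·∂²η/∂q² + (C/q² + D·q²)·η` for `q > 0`, where
`θ = α/2`, `C = (α⁴/128)(δ−1)(δ−3)` and `D = λ²/8`. -/
theorem eta_solves_backward (α lam δ θ C D : ℝ) (hα : 0 < α)
    (hθ : θ = α / 2) (hC : C = α ^ 4 / 128 * (δ - 1) * (δ - 3))
    (hD : D = lam ^ 2 / 8) (η : ℝ → ℝ → ℝ)
    (hη : ∀ t : ℝ, ∀ q : ℝ, 0 < q →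
      η t q = Real.exp (lam * δ * t / 4 - lam * q ^ 2 / α ^ 2) * q ^ ((δ - 1) / 2)) :
    ∀ t : ℝ, ∀ q : ℝ, 0 < q →
      θ ^ 2 * deriv (fun s => η s q) t
        = -(θ ^ 4 / 2) * deriv (deriv fun p => η t p) q
          + (C / q ^ 2 + D * q ^ 2) * η t q := by
  intro t q hq
  set c : ℝ := (δ - 1) / 2 with hc
  have hαne : (α : ℝ) ≠ 0 := hα.ne'
  -- smooth model
  set F : ℝ → ℝ → ℝ :=
    fun s p => Real.exp (lam * δ * s / 4 - lam * p ^ 2 / α ^ 2 + c * Real.log p) with hF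
  have hFe : ∀ s : ℝ, ∀ p : ℝ, 0 < p → F s p = η s p := by
    intro s p hp
    rw [hη s p hp, hF]
    simp only
    rw [Real.rpow_def_of_pos hp, ← Real.exp_add]
    ring_nf
  -- time derivative
  have htime : HasDerivAt (fun s => F s q) (lam * δ / 4 * F t q) t := by
    have h1 : HasDerivAt
        (fun s => lam * δ * s / 4 - lam * q ^ 2 / α ^ 2 + c * Real.log q)
        (lam * δ / 4) t := by
      have := (((hasDerivAt_id t).const_mul (lam * δ)).div_const 4).sub_const
        (lam * q ^ 2 / α ^ 2) |>.add_const (c * Real.log q)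
      convert this using 1
      case e'_9 => ring
      all_goals rfl
    have := h1.exp
    convert this using 1
    rw [hF]; ring
  have htd : deriv (fun s => η s q) t = lam * δ / 4 * F t q := by
    have h1 : (fun s => η s q) = fun s => F s q := by
      funext s; exact (hFe s q hq).symm
    rw [h1, htime.deriv]
  -- spatial first derivative (for all p > 0)
  set v : ℝ → ℝ := fun p => c * p⁻¹ - 2 * lam * p / α ^ 2 with hv
  have hspace : ∀ p : ℝ, 0 < p → HasDerivAt (fun x => F t x) (F t p * v p) p := by
    intro p hp
    have hpow : HasDerivAt (fun x : ℝ => x ^ 2) (2 * p) p := by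
      simpa using hasDerivAt_pow 2 p
    have h1 : HasDerivAt
        (fun x => lam * δ * t / 4 - lam * x ^ 2 / α ^ 2 + c * Real.log x)
        (-(lam * (2 * p) / α ^ 2) + c * p⁻¹) p := by
      have := ((hasDerivAt_const p (lam * δ * t / 4)).sub
        ((hpow.const_mul lam).div_const (α ^ 2))).add
        ((Real.hasDerivAt_log hp.ne').const_mul c)
      convert this using 1
      case e'_9 => ring
      all_goals rfl
    have := h1.exp
    convert this using 1
    rw [hF, hv]; ring
  -- derivative of η t agrees with F t * v on (0,∞)
  have hder_eq : ∀ p : ℝ, 0 < p → deriv (fun x => η t x) p = F t p * v p := by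
    intro p hp
    have heq : (fun x => η t x) =ᶠ[nhds p] fun x => F t x := by
      filter_upwards [Ioi_mem_nhds hp] with x hx
      exact (hFe t x hx).symm
    rw [heq.deriv_eq, (hspace p hp).deriv]
  -- second spatial derivative
  have hv' : HasDerivAt v (c * (-(q ^ 2)⁻¹) - 2 * lam / α ^ 2) q := by
    have := ((hasDerivAt_inv hq.ne').const_mul c).sub
      (((hasDerivAt_id q).const_mul (2 * lam)).div_const (α ^ 2))
    convert this using 1
    case e'_9 => ring
    all_goals rfl
  have hsecond : HasDerivAt (fun p => F t p * v p)
      (F t q * v q * v q + F t q * (c * (-(q ^ 2)⁻¹) - 2 * lam / α ^ 2)) q :=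
    (hspace q hq).mul hv'
  have hsd : deriv (deriv fun p => η t p) q
      = F t q * v q * v q + F t q * (c * (-(q ^ 2)⁻¹) - 2 * lam / α ^ 2) := by
    have heq : (deriv fun p => η t p) =ᶠ[nhds q] fun p => F t p * v p := by
      filter_upwards [Ioi_mem_nhds hq] with x hx
      exact hder_eq x hx
    rw [heq.deriv_eq, hsecond.deriv]
  -- conclude
  rw [htd, hsd, ← hFe t q hq, hθ, hC, hD, hv]
  have hqne : q ≠ 0 := hq.ne'
  field_simp
  ring
end

section
/- Let α > 0, λ ∈ ℝ, δ ∈ ℝ, and set θ = α/2, C = (α⁴/128)·(δ−1)·(δ−3), D = λ²/8. Define S(t,q) = −(α²λδ/16)·t + (λ/4)·q² − (α²(δ−1)/8)·ln q for t ∈ ℝ and q > 0. Then for all t ∈ ℝ and all q > 0: ∂S/∂t(t,q) + (θ²/2)·∂²S/∂q²(t,q) − (1/2)·(∂S/∂q(t,q))² + C/q² + D·q² = 0. -/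
open Real

/-- The function `S(t,q) = −(α²λδ/16)·t + (λ/4)·q² − (α²(δ−1)/8)·ln q` solves the
Hamilton–Jacobi–Bellman equation with potential `C/q² + D·q²` for `q > 0`, where
`θ = α/2`, `C = (α⁴/128)(δ−1)(δ−3)` and `D = λ²/8`. -/
theorem S_solves_hjb (α lam δ θ C D : ℝ) (hα : 0 < α)
    (hθ : θ = α / 2) (hC : C = α ^ 4 / 128 * (δ - 1) * (δ - 3))
    (hD : D = lam ^ 2 / 8) (S : ℝ → ℝ → ℝ)
    (hS : ∀ t : ℝ, ∀ q : ℝ, 0 < q →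
      S t q = -(α ^ 2 * lam * δ / 16) * t + lam / 4 * q ^ 2
        - α ^ 2 * (δ - 1) / 8 * Real.log q) :
    ∀ t : ℝ, ∀ q : ℝ, 0 < q →
      deriv (fun s => S s q) t + θ ^ 2 / 2 * deriv (deriv fun p => S t p) q
        - 1 / 2 * (deriv (fun p => S t p) q) ^ 2 + C / q ^ 2 + D * q ^ 2 = 0 := by
  intro t q hq
  set A : ℝ := α ^ 2 * lam * δ / 16 with hA
  set B : ℝ := α ^ 2 * (δ - 1) / 8 with hB
  -- time derivative
  have ht : deriv (fun s => S s q) t = -A := by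
    have heq : (fun s => S s q)
        = fun s => -A * s + (lam / 4 * q ^ 2 - B * Real.log q) := by
      funext s
      rw [hS s q hq]; ring
    rw [heq]
    have : HasDerivAt (fun s : ℝ => -A * s + (lam / 4 * q ^ 2 - B * Real.log q))
        (-A) t := by
      simpa using ((hasDerivAt_id t).const_mul (-A)).add_const (lam / 4 * q ^ 2 - B * Real.log q)
    exact this.deriv
  -- spatial derivatives
  have hg : ∀ p : ℝ, 0 < p →
      HasDerivAt (fun x => -A * t + lam / 4 * x ^ 2 - B * Real.log x)
        (lam / 2 * p - B / p) p := by
    intro p hp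
    have h1 : HasDerivAt (fun x : ℝ => lam / 4 * x ^ 2) (lam / 4 * (2 * p)) p := by
      simpa using (hasDerivAt_pow 2 p).const_mul (lam / 4)
    have h2 : HasDerivAt (fun x : ℝ => B * Real.log x) (B * p⁻¹) p :=
      (Real.hasDerivAt_log hp.ne').const_mul B
    have := ((h1.const_add (-A * t)).sub h2)
    refine HasDerivAt.congr_deriv this ?_
    ring
  have hd1 : ∀ p : ℝ, 0 < p →
      deriv (fun x => S t x) p = lam / 2 * p - B / p := by
    intro p hp
    have heq : (fun x => S t x) =ᶠ[nhds p]
        (fun x => -A * t + lam / 4 * x ^ 2 - B * Real.log x) := by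
      filter_upwards [IsOpen.mem_nhds isOpen_Ioi hp] with x hx
      rw [hS t x hx]
    rw [heq.deriv_eq]
    exact (hg p hp).deriv
  have hd2 : deriv (deriv fun p => S t p) q = lam / 2 + B / q ^ 2 := by
    have heq : (deriv fun p => S t p) =ᶠ[nhds q]
        (fun p => lam / 2 * p - B / p) := by
      filter_upwards [IsOpen.mem_nhds isOpen_Ioi hq] with x hx
      exact hd1 x hx
    rw [heq.deriv_eq]
    have h1 : HasDerivAt (fun p : ℝ => lam / 2 * p) (lam / 2) q := by
      simpa using (hasDerivAt_id q).const_mul (lam / 2)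
    have h2 : HasDerivAt (fun p : ℝ => B / p) (-B / q ^ 2) q := by
      simpa [div_eq_mul_inv] using
        ((hasDerivAt_inv hq.ne').const_mul B)
    have := h1.sub h2
    rw [show (fun p => lam / 2 * p - B / p) = ((fun p : ℝ => lam / 2 * p) - fun p => B / p) from rfl, this.deriv]
    ring
  rw [ht, hd2, hd1 q hq, hθ, hC, hD, hA, hB]
  field_simp
  ring
end

section
/- Let α > 0 and λ > 0, and set θ = α/2. Define η_*(t,q) = (16λ^{3/2}/(α³√(2π)))·(1 − e^{−λt})^{−3/2}·q·e^{−3λt/4 − λq²/(α²·tanh(λt/2))} for t > 0 and q ∈ ℝ. Then for all t > 0 and all q ∈ ℝ: −θ²·∂η_*/∂t(t,q) = −(θ⁴/2)·∂²η_*/∂q²(t,q) + (λ²/8)·q²·η_*(t,q). -/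
open Real



theorem tanh_aux (x : ℝ) : Real.tanh x = (1 - Real.exp (-(2*x))) / (1 + Real.exp (-(2*x))) := by
  have hu : Real.exp (-(2*x)) = Real.exp (-x) * Real.exp (-x) := by
    rw [← Real.exp_add]; ring_nf
  rw [Real.tanh_eq_sinh_div_cosh, Real.sinh_eq, Real.cosh_eq, Real.exp_neg, hu, Real.exp_neg]
  have h0 : Real.exp x ≠ 0 := (Real.exp_pos x).ne'
  have h1 : (Real.exp x)⁻¹ + Real.exp x ≠ 0 := by positivity
  have h2 : (1 + (Real.exp x)⁻¹ * (Real.exp x)⁻¹) ≠ 0 := by positivity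
  field_simp

-- generic q-derivative lemmas
theorem qderiv (c m r : ℝ) (p : ℝ) :
    HasDerivAt (fun x : ℝ => c * x * Real.exp (r + m * x^2))
      (c * Real.exp (r + m * p^2) * (1 + 2*m*p^2)) p := by
  have hh : HasDerivAt (fun x : ℝ => r + m * x^2) (2*m*p) p := by
    have := ((hasDerivAt_pow 2 p).const_mul m).const_add r
    convert this using 1
    · rfl
    · rfl
    push_cast; ring
  have := ((hasDerivAt_id p).fun_mul hh.exp).const_mul c
  convert this using 1
  · rfl
  · rfl
  · funext x; simp only [id]; ring
  · simp only [id]; ring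

theorem qderiv2 (c m r : ℝ) (p : ℝ) :
    HasDerivAt (fun x : ℝ => c * Real.exp (r + m * x^2) * (1 + 2*m*x^2))
      (c * Real.exp (r + m * p^2) * (2*m*p*(1+2*m*p^2) + 4*m*p)) p := by
  have hh : HasDerivAt (fun x : ℝ => r + m * x^2) (2*m*p) p := by
    have := ((hasDerivAt_pow 2 p).const_mul m).const_add r
    convert this using 1
    · rfl
    · rfl
    push_cast; ring
  have hg : HasDerivAt (fun x : ℝ => 1 + 2*m*x^2) (4*m*p) p := by
    have := ((hasDerivAt_pow 2 p).const_mul (2*m)).const_add 1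
    convert this using 1
    · rfl
    · rfl
    push_cast; ring
  have := (hh.exp.fun_mul hg).const_mul c
  convert this using 1
  · rfl
  · rfl
  · funext x; ring
  · ring

theorem tderiv (c q lam α t : ℝ) (hα : α ≠ 0) (hE : 1 - Real.exp (-(lam*t)) ≠ 0) :
    HasDerivAt (fun s : ℝ => c * (1 - Real.exp (-(lam*s))) ^ (-(3:ℝ)/2) * q *
        Real.exp (-(3*lam*s)/4 - lam*q^2*(1+Real.exp (-(lam*s)))/(α^2*(1-Real.exp (-(lam*s))))))
      (c * q * Real.exp (-(3*lam*t)/4 - lam*q^2*(1+Real.exp (-(lam*t)))/(α^2*(1-Real.exp (-(lam*t))))) *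
        ( (-(3:ℝ)/2) * (1 - Real.exp (-(lam*t))) ^ ((-(3:ℝ)/2)-1) * (lam*Real.exp (-(lam*t)))
          + (1 - Real.exp (-(lam*t))) ^ (-(3:ℝ)/2) *
            (-(3*lam)/4 + 2*lam^2*q^2*Real.exp (-(lam*t)) /(α^2*(1-Real.exp (-(lam*t)))^2)) )) t := by
  have hv : HasDerivAt (fun s : ℝ => Real.exp (-(lam*s))) (Real.exp (-(lam*t)) * -lam) t := by
    have h1 : HasDerivAt (fun s : ℝ => -(lam*s)) (-lam) t := by
      simpa using ((hasDerivAt_id t).const_mul lam).fun_neg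
    exact h1.exp
  have hu : HasDerivAt (fun s : ℝ => (1 - Real.exp (-(lam*s))) ^ (-(3:ℝ)/2))
      ((-(3:ℝ)/2) * (1 - Real.exp (-(lam*t))) ^ ((-(3:ℝ)/2)-1) * (lam*Real.exp (-(lam*t)))) t := by
    have := (hv.const_sub 1).rpow_const (p := -(3:ℝ)/2) (Or.inl hE)
    convert this using 1
    ring
  have hden : α^2*(1-Real.exp (-(lam*t))) ≠ 0 := by
    exact mul_ne_zero (pow_ne_zero 2 hα) hE
  have hdiv : HasDerivAt (fun s : ℝ => lam*q^2*(1+Real.exp (-(lam*s)))/(α^2*(1-Real.exp (-(lam*s)))))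
      (((lam*q^2*(Real.exp (-(lam*t)) * -lam)) * (α^2*(1-Real.exp (-(lam*t))))
        - (lam*q^2*(1+Real.exp (-(lam*t)))) * (α^2*(-(Real.exp (-(lam*t)) * -lam))))
        / (α^2*(1-Real.exp (-(lam*t))))^2) t :=
    ((hv.const_add 1).const_mul (lam*q^2)).div ((hv.const_sub 1).const_mul (α^2)) hden
  have hlin : HasDerivAt (fun s : ℝ => -(3*lam*s)/4) (-(3*lam)/4) t := by
    simpa using (((hasDerivAt_id t).const_mul (3*lam)).neg.div_const 4)
  have hφ := (hlin.fun_sub hdiv).exp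
  have := ((hu.const_mul c).mul_const q).fun_mul hφ
  convert this using 1
  · rfl
  · rfl
  field_simp
  ring

/-- For `δ = 3`, the function
`η_*(t,q) = (16λ^{3/2}/(α³√(2π)))·(1 − e^{−λt})^{−3/2}·q·e^{−3λt/4 − λq²/(α²·tanh(λt/2))}`
satisfies the adjoint equation `−θ²·∂η_*/∂t = −(θ⁴/2)·∂²η_*/∂q² + (λ²/8)·q²·η_*`
for `t > 0`, where `θ = α/2`. -/
theorem eta_star_solves_adjoint_delta_three (α lam θ : ℝ) (hα : 0 < α) (hlam : 0 < lam)
    (hθ : θ = α / 2) (ηs : ℝ → ℝ → ℝ)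
    (hηs : ∀ t : ℝ, 0 < t → ∀ q : ℝ,
      ηs t q = 16 * lam ^ ((3 : ℝ) / 2) / (α ^ 3 * Real.sqrt (2 * π))
        * (1 - Real.exp (-(lam * t))) ^ (-(3 : ℝ) / 2) * q
        * Real.exp (-(3 * lam * t) / 4
            - lam * q ^ 2 / (α ^ 2 * Real.tanh (lam * t / 2)))) :
    ∀ t : ℝ, 0 < t → ∀ q : ℝ,
      -θ ^ 2 * deriv (fun s => ηs s q) t
        = -(θ ^ 4 / 2) * deriv (deriv fun p => ηs t p) q
          + lam ^ 2 / 8 * q ^ 2 * ηs t q := by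
  intro t ht q
  have hαne : α ≠ 0 := hα.ne'
  have htanh : ∀ s : ℝ, Real.tanh (lam*s/2)
      = (1 - Real.exp (-(lam*s)))/(1 + Real.exp (-(lam*s))) := by
    intro s
    have h := tanh_aux (lam*s/2)
    rw [show -(2 * (lam * s / 2)) = -(lam * s) by ring] at h
    exact h
  have hepos : (0:ℝ) < Real.exp (-(lam*t)) := Real.exp_pos _
  have he1 : Real.exp (-(lam*t)) < 1 := by
    rw [Real.exp_lt_one_iff]
    nlinarith
  have hE : (0:ℝ) < 1 - Real.exp (-(lam*t)) := by linarith
  set e := Real.exp (-(lam*t)) with he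
  have hE' : 1 - e ≠ 0 := hE.ne'
  have h1e : 1 + e ≠ 0 := by positivity
  set c := 16 * lam ^ ((3:ℝ)/2) / (α ^ 3 * Real.sqrt (2 * π)) with hc
  set A := (1 - e) ^ (-(3:ℝ)/2) with hA
  set m := -(lam*(1+e)/(α^2*(1-e))) with hm
  -- q-direction
  have hfq : (fun p => ηs t p) = fun p : ℝ => c * A * p * Real.exp (-(3*lam*t)/4 + m*p^2) := by
    funext p
    rw [hηs t ht p, htanh t, ← he, ← hA]
    rw [show -(3 * lam * t) / 4 = -(3*lam*t)/4 by ring]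
    congr 1
    rw [Real.exp_eq_exp, hm]
    field_simp
    ring
  have hd2 : deriv (deriv fun p => ηs t p) q
      = c * A * Real.exp (-(3*lam*t)/4 + m*q^2) * (2*m*q*(1+2*m*q^2) + 4*m*q) := by
    have h1 : (deriv fun p => ηs t p)
        = fun p : ℝ => c * A * Real.exp (-(3*lam*t)/4 + m*p^2) * (1 + 2*m*p^2) := by
      funext p
      rw [hfq]
      exact (qderiv (c*A) m (-(3*lam*t)/4) p).deriv
    rw [h1]
    exact (qderiv2 (c*A) m (-(3*lam*t)/4) q).deriv
  -- t-direction
  have hft : (fun s => ηs s q) =ᶠ[nhds t] (fun s : ℝ =>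
      c * (1 - Real.exp (-(lam*s))) ^ (-(3:ℝ)/2) * q *
        Real.exp (-(3*lam*s)/4 - lam*q^2*(1+Real.exp (-(lam*s)))/(α^2*(1-Real.exp (-(lam*s)))))) := by
    filter_upwards [Ioi_mem_nhds ht] with s hs
    rw [hηs s hs q, htanh s]
    have hes : Real.exp (-(lam*s)) < 1 := by
      rw [Real.exp_lt_one_iff]
      have : (0:ℝ) < s := hs
      nlinarith
    have hEs : 1 - Real.exp (-(lam*s)) ≠ 0 := by linarith
    have h1s : 1 + Real.exp (-(lam*s)) ≠ 0 := by positivity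
    rw [show -(3 * lam * s) / 4 = -(3*lam*s)/4 by ring]
    congr 1
    rw [Real.exp_eq_exp]
    field_simp
  have hEt : 1 - Real.exp (-(lam*t)) ≠ 0 := by rw [← he]; exact hE'
  have hdt : deriv (fun s => ηs s q) t
      = c * q * Real.exp (-(3*lam*t)/4 - lam*q^2*(1+e)/(α^2*(1-e))) *
        ( (-(3:ℝ)/2) * (1 - e) ^ ((-(3:ℝ)/2)-1) * (lam*e)
          + A * (-(3*lam)/4 + 2*lam^2*q^2*e/(α^2*(1-e)^2)) ) := by
    rw [hft.deriv_eq, (tderiv c q lam α t hαne hEt).deriv, ← he, ← hA]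
  have hval : ηs t q = c * A * q * Real.exp (-(3*lam*t)/4 + m*q^2) := by
    have := congrFun hfq q
    simpa using this
  have hBB : Real.exp (-(3*lam*t)/4 - lam*q^2*(1+e)/(α^2*(1-e)))
      = Real.exp (-(3*lam*t)/4 + m*q^2) := by
    rw [Real.exp_eq_exp, hm]
    ring
  have hP1 : (1 - e) ^ ((-(3:ℝ)/2)-1) = A / (1 - e) := by
    rw [hA, Real.rpow_sub hE, Real.rpow_one]
  rw [hdt, hd2, hval, hBB, hP1, hθ, hm]
  field_simp
  ring
end

section
/- Let α > 0, λ > 0, z₀ ∈ ℝ, and set θ = α/2. Define η_*(t,q) = (1/α)·√(λ/(π·sinh(λt/2)))·exp((−λq² − λq²e^{−λt} + 4λq·z₀·e^{−λt/2} − 2λz₀²e^{−λt})/(α²(1 − e^{−λt}))) for t > 0 and q ∈ ℝ. Then for all t > 0 and all q ∈ ℝ: −θ²·∂η_*/∂t(t,q) = −(θ⁴/2)·∂²η_*/∂q²(t,q) + (λ²/8)·q²·η_*(t,q). -/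
open Real

set_option maxHeartbeats 1000000 in
/-- For `δ = 1`, the function
`η_*(t,q) = (1/α)·√(λ/(π·sinh(λt/2)))·exp((−λq² − λq²e^{−λt} + 4λq·z₀·e^{−λt/2} − 2λz₀²e^{−λt})/(α²(1 − e^{−λt})))`
satisfies the adjoint equation `−θ²·∂η_*/∂t = −(θ⁴/2)·∂²η_*/∂q² + (λ²/8)·q²·η_*`
for `t > 0`, where `θ = α/2`. -/
theorem eta_star_solves_adjoint_delta_one (α lam z₀ θ : ℝ) (hα : 0 < α) (hlam : 0 < lam)
    (hθ : θ = α / 2) (ηs : ℝ → ℝ → ℝ)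
    (hηs : ∀ t : ℝ, 0 < t → ∀ q : ℝ,
      ηs t q = 1 / α * Real.sqrt (lam / (π * Real.sinh (lam * t / 2)))
        * Real.exp ((-(lam * q ^ 2) - lam * q ^ 2 * Real.exp (-(lam * t))
            + 4 * lam * q * z₀ * Real.exp (-(lam * t) / 2)
            - 2 * lam * z₀ ^ 2 * Real.exp (-(lam * t)))
          / (α ^ 2 * (1 - Real.exp (-(lam * t)))))) :
    ∀ t : ℝ, 0 < t → ∀ q : ℝ,
      -θ ^ 2 * deriv (fun s => ηs s q) t
        = -(θ ^ 4 / 2) * deriv (deriv fun p => ηs t p) q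
          + lam ^ 2 / 8 * q ^ 2 * ηs t q := by
  subst hθ
  intro t ht q
  have hα0 : α ≠ 0 := ne_of_gt hα
  have ht2 : 0 < lam * t / 2 := by positivity
  have hsh : 0 < Real.sinh (lam * t / 2) := Real.sinh_pos_iff.2 ht2
  have hg0 : 0 < lam / (π * Real.sinh (lam * t / 2)) := by positivity
  have hu1 : Real.exp (-(lam * t)) < 1 := Real.exp_lt_one_iff.2 (by nlinarith)
  have hu0 : 0 < Real.exp (-(lam * t)) := Real.exp_pos _
  have hv0 : 0 < Real.exp (-(lam * t) / 2) := Real.exp_pos _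
  have hv1 : Real.exp (-(lam * t) / 2) < 1 := Real.exp_lt_one_iff.2 (by nlinarith)
  have hDne : α ^ 2 * (1 - Real.exp (-(lam * t))) ≠ 0 := by
    have : 0 < 1 - Real.exp (-(lam * t)) := by linarith
    positivity
  -- t-derivative
  have hid : HasDerivAt (fun s : ℝ => s) 1 t := hasDerivAt_id t
  have hsinhD : HasDerivAt (fun s => Real.sinh (lam * s / 2))
      (Real.cosh (lam * t / 2) * (lam * 1 / 2)) t := ((hid.const_mul lam).div_const 2).sinh
  have hgt := (hasDerivAt_const t lam).div (hsinhD.const_mul π)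
      (by positivity : π * Real.sinh (lam * t / 2) ≠ 0)
  have he1 : HasDerivAt (fun s => Real.exp (-(lam * s)))
      (Real.exp (-(lam * t)) * -(lam * 1)) t := ((hid.const_mul lam).neg).exp
  have he2 : HasDerivAt (fun s => Real.exp (-(lam * s) / 2))
      (Real.exp (-(lam * t) / 2) * (-(lam * 1) / 2)) t :=
    (((hid.const_mul lam).neg).div_const 2).exp
  have hNt : HasDerivAt (fun s => -(lam * q ^ 2) - lam * q ^ 2 * Real.exp (-(lam * s))
      + 4 * lam * q * z₀ * Real.exp (-(lam * s) / 2)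
      - 2 * lam * z₀ ^ 2 * Real.exp (-(lam * s)))
      (0 - lam * q ^ 2 * (Real.exp (-(lam * t)) * -(lam * 1))
        + 4 * lam * q * z₀ * (Real.exp (-(lam * t) / 2) * (-(lam * 1) / 2))
        - 2 * lam * z₀ ^ 2 * (Real.exp (-(lam * t)) * -(lam * 1))) t :=
    (((hasDerivAt_const t (-(lam * q ^ 2))).sub (he1.const_mul (lam * q ^ 2))).add
      (he2.const_mul (4 * lam * q * z₀))).sub (he1.const_mul (2 * lam * z₀ ^ 2))
  have hDen : HasDerivAt (fun s => α ^ 2 * (1 - Real.exp (-(lam * s))))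
      (α ^ 2 * (0 - Real.exp (-(lam * t)) * -(lam * 1))) t :=
    ((hasDerivAt_const t 1).sub he1).const_mul (α ^ 2)
  have hFt := ((hgt.sqrt (ne_of_gt hg0)).const_mul (1 / α)).mul ((hNt.div hDen hDne).exp)
  have hev : (fun s => ηs s q) =ᶠ[nhds t]
      (fun s => 1 / α * Real.sqrt (lam / (π * Real.sinh (lam * s / 2)))
        * Real.exp ((-(lam * q ^ 2) - lam * q ^ 2 * Real.exp (-(lam * s))
            + 4 * lam * q * z₀ * Real.exp (-(lam * s) / 2)
            - 2 * lam * z₀ ^ 2 * Real.exp (-(lam * s)))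
          / (α ^ 2 * (1 - Real.exp (-(lam * s)))))) := by
    filter_upwards [eventually_gt_nhds ht] with s hs using hηs s hs q
  have hdt := hev.deriv_eq.trans hFt.deriv
  -- q-derivatives
  have hN : ∀ p : ℝ, HasDerivAt (fun p => -(lam * p ^ 2)
      - lam * p ^ 2 * Real.exp (-(lam * t))
      + 4 * lam * p * z₀ * Real.exp (-(lam * t) / 2)
      - 2 * lam * z₀ ^ 2 * Real.exp (-(lam * t)))
      (-(lam * (2 * p)) - lam * (2 * p) * Real.exp (-(lam * t))
        + 4 * lam * 1 * z₀ * Real.exp (-(lam * t) / 2) - 0) p := by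
    intro p
    have hsq : HasDerivAt (fun x : ℝ => x ^ 2) (2 * p) p := by
      simpa using hasDerivAt_pow 2 p
    exact (((hsq.const_mul lam).neg.sub
        ((hsq.const_mul lam).mul_const (Real.exp (-(lam * t))))).add
        ((((hasDerivAt_id p).const_mul (4 * lam)).mul_const z₀).mul_const
          (Real.exp (-(lam * t) / 2)))).sub
        (hasDerivAt_const p (2 * lam * z₀ ^ 2 * Real.exp (-(lam * t))))
  have hq1 : ∀ p : ℝ, HasDerivAt (fun p => 1 / α
      * Real.sqrt (lam / (π * Real.sinh (lam * t / 2)))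
      * Real.exp ((-(lam * p ^ 2) - lam * p ^ 2 * Real.exp (-(lam * t))
          + 4 * lam * p * z₀ * Real.exp (-(lam * t) / 2)
          - 2 * lam * z₀ ^ 2 * Real.exp (-(lam * t)))
        / (α ^ 2 * (1 - Real.exp (-(lam * t))))))
      (1 / α * Real.sqrt (lam / (π * Real.sinh (lam * t / 2)))
        * (Real.exp ((-(lam * p ^ 2) - lam * p ^ 2 * Real.exp (-(lam * t))
            + 4 * lam * p * z₀ * Real.exp (-(lam * t) / 2)
            - 2 * lam * z₀ ^ 2 * Real.exp (-(lam * t)))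
          / (α ^ 2 * (1 - Real.exp (-(lam * t)))))
          * ((-(lam * (2 * p)) - lam * (2 * p) * Real.exp (-(lam * t))
            + 4 * lam * 1 * z₀ * Real.exp (-(lam * t) / 2) - 0)
          / (α ^ 2 * (1 - Real.exp (-(lam * t))))))) p := fun p =>
    (((hN p).div_const (α ^ 2 * (1 - Real.exp (-(lam * t))))).exp).const_mul
      (1 / α * Real.sqrt (lam / (π * Real.sinh (lam * t / 2))))
  have hd1 : (deriv fun p => ηs t p) = fun p => 1 / α
      * Real.sqrt (lam / (π * Real.sinh (lam * t / 2)))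
      * (Real.exp ((-(lam * p ^ 2) - lam * p ^ 2 * Real.exp (-(lam * t))
          + 4 * lam * p * z₀ * Real.exp (-(lam * t) / 2)
          - 2 * lam * z₀ ^ 2 * Real.exp (-(lam * t)))
        / (α ^ 2 * (1 - Real.exp (-(lam * t)))))
        * ((-(lam * (2 * p)) - lam * (2 * p) * Real.exp (-(lam * t))
          + 4 * lam * 1 * z₀ * Real.exp (-(lam * t) / 2) - 0)
        / (α ^ 2 * (1 - Real.exp (-(lam * t)))))) := by
    funext p
    have hfun : (fun p => ηs t p) = fun p => 1 / α
        * Real.sqrt (lam / (π * Real.sinh (lam * t / 2)))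
        * Real.exp ((-(lam * p ^ 2) - lam * p ^ 2 * Real.exp (-(lam * t))
            + 4 * lam * p * z₀ * Real.exp (-(lam * t) / 2)
            - 2 * lam * z₀ ^ 2 * Real.exp (-(lam * t)))
          / (α ^ 2 * (1 - Real.exp (-(lam * t))))) := funext fun p => hηs t ht p
    rw [hfun]
    exact (hq1 p).deriv
  have hp2 : HasDerivAt (fun p : ℝ => lam * (2 * p)) (lam * (2 * 1)) q :=
    ((hasDerivAt_id q).const_mul 2).const_mul lam
  have hM : HasDerivAt (fun p => -(lam * (2 * p)) - lam * (2 * p) * Real.exp (-(lam * t))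
      + 4 * lam * 1 * z₀ * Real.exp (-(lam * t) / 2) - 0)
      (-(lam * (2 * 1)) - lam * (2 * 1) * Real.exp (-(lam * t)) + 0 - 0) q :=
    ((hp2.neg.sub (hp2.mul_const (Real.exp (-(lam * t))))).add
      (hasDerivAt_const q (4 * lam * 1 * z₀ * Real.exp (-(lam * t) / 2)))).sub
      (hasDerivAt_const q 0)
  have hq2 := ((((hN q).div_const (α ^ 2 * (1 - Real.exp (-(lam * t))))).exp.mul
      (hM.div_const (α ^ 2 * (1 - Real.exp (-(lam * t)))))).const_mul
      (1 / α * Real.sqrt (lam / (π * Real.sinh (lam * t / 2)))))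
  have hdq := (congrArg (fun f => deriv f q) hd1).trans hq2.deriv
  rw [hdt, hdq, hηs t ht q]
  simp only [Pi.div_apply]
  -- algebra
  have hw : Real.exp (lam * t / 2) = 1 / Real.exp (-(lam * t) / 2) := by
    rw [one_div, ← Real.exp_neg]; congr 1; ring
  have hw' : Real.exp (-(lam * t / 2)) = Real.exp (-(lam * t) / 2) := by congr 1; ring
  have hsinh : Real.sinh (lam * t / 2)
      = (1 / Real.exp (-(lam * t) / 2) - Real.exp (-(lam * t) / 2)) / 2 := by
    rw [Real.sinh_eq, hw, hw']
  have hcosh : Real.cosh (lam * t / 2)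
      = (1 / Real.exp (-(lam * t) / 2) + Real.exp (-(lam * t) / 2)) / 2 := by
    rw [Real.cosh_eq, hw, hw']
  have huv : Real.exp (-(lam * t)) = Real.exp (-(lam * t) / 2) ^ 2 := by
    rw [sq, ← Real.exp_add]; congr 1; ring
  rw [huv, hsinh, hcosh]
  set v := Real.exp (-(lam * t) / 2) with hvdef
  have hvne : v ≠ 0 := ne_of_gt hv0
  have hv2 : 0 < 1 - v ^ 2 := by nlinarith
  have hvv : 0 < 1 / v - v := by
    rw [sub_pos, lt_div_iff₀ hv0]; nlinarith
  have hg0' : 0 < lam / (π * ((1 / v - v) / 2)) := by positivity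
  set s := Real.sqrt (lam / (π * ((1 / v - v) / 2))) with hsdef
  have hs0 : 0 < s := Real.sqrt_pos.2 hg0'
  have hs2 : s ^ 2 = lam / (π * ((1 / v - v) / 2)) := Real.sq_sqrt hg0'.le
  have h2s : 2 * s = 2 * (lam / (π * ((1 / v - v) / 2))) / s := by
    rw [eq_div_iff (ne_of_gt hs0), ← hs2]; ring
  rw [h2s]
  set E := Real.exp ((-(lam * q ^ 2) - lam * q ^ 2 * v ^ 2
      + 4 * lam * q * z₀ * v - 2 * lam * z₀ ^ 2 * v ^ 2)
    / (α ^ 2 * (1 - v ^ 2))) with hEdef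
  have hvv' : 1 / v - v ≠ 0 := ne_of_gt hvv
  have hv2' : (1 : ℝ) - v ^ 2 ≠ 0 := ne_of_gt hv2
  field_simp
  ring_nf
end
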